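/- Let F be a filter on S ⊆ T such that every member of F is piecewise syndetic in the multiplicative semigroup (S, ·). Then every homogeneous polynomial system that is partition regular on S is also F-partition regular on S. -/

import Mathlib

open Filter Set

attribute [local instance] Ultrafilter.mul Ultrafilter.semigroup

/-- `I` is a two-sided ideal of the semigroup `βS`. -/
def IsTwoSidedIdealBeta {S : Type*} [Semigroup S] (I : Set (Ultrafilter S)) : Prop :=
  I.Nonempty ∧ ∀ p : Ultrafilter S, ∀ q ∈ I, p * q ∈ I ∧ q * p ∈ I

/-- `p` belongs to the smallest two-sided ideal `K(βS, ⊙)`. -/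
def InSmallestIdealBeta {S : Type*} [Semigroup S] (p : Ultrafilter S) : Prop :=
  ∀ I : Set (Ultrafilter S), IsTwoSidedIdealBeta I → p ∈ I

/-- `A` is piecewise syndetic in `(S, ·)`: its closure in `βS` meets `K(βS, ⊙)`. -/
def PiecewiseSyndetic {S : Type*} [Semigroup S] (A : Set S) : Prop :=
  ∃ p : Ultrafilter S, A ∈ p ∧ InSmallestIdealBeta p

/-- Evaluating a homogeneous polynomial at a scaled point. -/
lemma eval_mul_left_of_isHomogeneous {R : Type*} [CommSemiring R] {n N : ℕ}
    {P : MvPolynomial (Fin n) R} (h : P.IsHomogeneous N) (c : R) (x : Fin n → R) :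
    MvPolynomial.eval (fun i => c * x i) P = c ^ N * MvPolynomial.eval x P := by
  rw [MvPolynomial.eval_eq', MvPolynomial.eval_eq', Finset.mul_sum]
  refine Finset.sum_congr rfl fun D hD => ?_
  have hc : P.coeff D ≠ 0 := MvPolynomial.mem_support_iff.mp hD
  have hdeg : ∑ i, D i = N := by
    have h1 : Finsupp.weight (fun _ => 1) D = N := h hc
    rw [← Finsupp.degree_eq_weight_one] at h1
    rw [← h1, Finsupp.degree]
    exact (Finset.sum_subset (Finset.subset_univ _)
      (fun i _ hi => Finsupp.notMem_support_iff.mp hi)).symm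
  simp_rw [mul_pow]
  rw [Finset.prod_mul_distrib, Finset.prod_pow_eq_pow_sum, hdeg]
  ring

/-- If every member of `F` is piecewise syndetic in `(S, ·)`, then every homogeneous polynomial
system that is partition regular on `S` is also `F`-partition regular on `S`. -/
theorem stmt19 {R : Type*} [CommSemiring R] (S : Subsemigroup R) (F : Filter ↥S)
    (hpws : ∀ A ∈ F, PiecewiseSyndetic (A : Set ↥S))
    {n m : ℕ} (P : Fin m → MvPolynomial (Fin n) R) (d : Fin m → ℕ)
    (hhom : ∀ l, (P l).IsHomogeneous (d l))
    (hPR : ∀ (k : ℕ) (A : Fin k → Set ↥S), ({x : ↥S | (x : R) ≠ 0} ⊆ ⋃ j, A j) →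
        ∃ (j : Fin k) (a : Fin n → ↥S), (∀ i, a i ∈ A j ∧ (a i : R) ≠ 0) ∧
          ∀ l, MvPolynomial.eval (fun i => (a i : R)) (P l) = 0) :
    ∀ V ∈ F, ∀ (k : ℕ) (A : Fin k → Set ↥S), (⋃ j, A j) = Set.univ →
      ∃ (j : Fin k) (a : Fin n → ↥S), (∀ i, a i ∈ A j ∧ a i ∈ V) ∧
        ∀ l, MvPolynomial.eval (fun i => (a i : R)) (P l) = 0 := by
  classical
  -- `Sol a` : `a` is a solution of the system.
  set Sol : (Fin n → ↥S) → Prop :=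
    fun a => ∀ l, MvPolynomial.eval (fun i => (a i : R)) (P l) = 0 with hSol
  -- `W` : ultrafilters all of whose members contain a solution.
  set W : Set (Ultrafilter ↥S) :=
    {p | ∀ A ∈ p, ∃ a : Fin n → ↥S, (∀ i, a i ∈ A) ∧ Sol a} with hW
  -- Solutions scale on both sides.
  have scaleL : ∀ (c : ↥S) (a : Fin n → ↥S), Sol a → Sol (fun i => c * a i) := by
    intro c a ha l
    have : MvPolynomial.eval (fun i => (c : R) * ((a i : R))) (P l)
        = (c : R) ^ (d l) * MvPolynomial.eval (fun i => (a i : R)) (P l) :=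
      eval_mul_left_of_isHomogeneous (hhom l) _ _
    simpa [ha l] using this
  have scaleR : ∀ (c : ↥S) (a : Fin n → ↥S), Sol a → Sol (fun i => a i * c) := by
    intro c a ha l
    have h1 := scaleL c a ha l
    simpa [MulMemClass.coe_mul, mul_comm] using h1
  -- `W` is nonempty.
  have hWne : W.Nonempty := by
    by_cases hcov : ∃ T : Finset (Set ↥S),
        (∀ A ∈ T, ¬ ∃ a : Fin n → ↥S, (∀ i, a i ∈ A) ∧ Sol a) ∧
        {x : ↥S | (x : R) ≠ 0} ⊆ ⋃ A ∈ T, A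
    · -- finitely many solution-free sets cover the nonzero elements: contradicts `hPR`.
      exfalso
      obtain ⟨T, hTfree, hTcov⟩ := hcov
      obtain ⟨j, a, ha, hsol⟩ := hPR T.card (fun j => (T.equivFin.symm j : Set ↥S)) (by
        intro x hx
        obtain ⟨B, hBmem, hxB⟩ := by
          simpa using hTcov hx
        exact Set.mem_iUnion.mpr ⟨T.equivFin ⟨B, hBmem⟩, by simpa using hxB⟩)
      exact hTfree _ (T.equivFin.symm j).2 ⟨a, fun i => (ha i).1, hsol⟩
    · -- otherwise the complements of solution-free sets generate a proper filter.
      set N : Set (Set ↥S) := {A | ¬ ∃ a : Fin n → ↥S, (∀ i, a i ∈ A) ∧ Sol a} with hN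
      have hnc : ∀ T : Finset (Set ↥S), (∀ A ∈ T, A ∈ N) →
          ∃ x : ↥S, (x : R) ≠ 0 ∧ x ∉ ⋃ A ∈ T, A := by
        intro T hT
        by_contra h'
        push_neg at h'
        exact hcov ⟨T, fun A hA => hT A hA, fun x hx => h' x hx⟩
      have hgen : (Filter.generate (compl '' N)).NeBot := by
        rw [Filter.generate_neBot_iff]
        intro t hts htfin
        have htN : ∀ B ∈ htfin.toFinset, Bᶜ ∈ N := by
          intro B hB
          obtain ⟨A, hA, rfl⟩ := hts (htfin.mem_toFinset.mp hB)
          simpa using hA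
        obtain ⟨x, hx0, hxnot⟩ := hnc (htfin.toFinset.image compl) (by
          intro A hA
          obtain ⟨B, hB, rfl⟩ := Finset.mem_image.mp hA
          exact htN B hB)
        refine ⟨x, ?_⟩
        intro B hB
        by_contra hxB
        exact hxnot (Set.mem_iUnion₂.mpr ⟨Bᶜ,
          Finset.mem_image.mpr ⟨B, htfin.mem_toFinset.mpr hB, rfl⟩, hxB⟩)
      refine ⟨Ultrafilter.of (Filter.generate (compl '' N)), ?_⟩
      intro A hA
      by_contra hAsol
      have : Aᶜ ∈ Ultrafilter.of (Filter.generate (compl '' N)) :=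
        Ultrafilter.of_le _ (Filter.mem_generate_of_mem ⟨A, hAsol, rfl⟩)
      exact (Ultrafilter.compl_mem_iff_notMem.mp this) hA
  -- `W` is a two-sided ideal.
  have hWideal : IsTwoSidedIdealBeta W := by
    refine ⟨hWne, fun p q hq => ⟨?_, ?_⟩⟩
    · -- left: `p * q ∈ W`
      intro A hA
      have h1 : ∀ᶠ x in (p : Filter ↥S), ∀ᶠ y in (q : Filter ↥S), x * y ∈ A :=
        (Ultrafilter.eventually_mul p q (· ∈ A)).mp hA
      obtain ⟨x, hx⟩ := h1.exists
      obtain ⟨a, haB, hasol⟩ := hq _ hx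
      exact ⟨fun i => x * a i, fun i => haB i, scaleL x a hasol⟩
    · -- right: `q * p ∈ W`
      intro A hA
      have h1 : ∀ᶠ x in (q : Filter ↥S), ∀ᶠ y in (p : Filter ↥S), x * y ∈ A :=
        (Ultrafilter.eventually_mul q p (· ∈ A)).mp hA
      obtain ⟨a, haB, hasol⟩ := hq _ h1
      have h2 : (⋂ i, {y : ↥S | a i * y ∈ A}) ∈ p := by
        refine Filter.iInter_mem.mpr fun i => haB i
      obtain ⟨y, hy⟩ := p.nonempty_of_mem h2
      refine ⟨fun i => a i * y, fun i => Set.mem_iInter.mp hy i, scaleR y a hasol⟩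
  -- Conclusion.
  intro V hV k A hAcov
  obtain ⟨p, hVp, hK⟩ := hpws V hV
  have hpW : p ∈ W := hK W hWideal
  have hUp : (⋃ j, A j) ∈ p := by rw [hAcov]; exact Filter.univ_mem
  have : ∃ j, A j ∈ p := by
    have := (Ultrafilter.finite_biUnion_mem_iff (Set.finite_univ (α := Fin k))).mp
      (by simpa using hUp)
    obtain ⟨j, -, hj⟩ := this
    exact ⟨j, hj⟩
  obtain ⟨j, hjp⟩ := this
  obtain ⟨a, haAV, hasol⟩ := hpW (A j ∩ V) (Filter.inter_mem hjp hVp)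
  exact ⟨j, a, fun i => ⟨(haAV i).1, (haAV i).2⟩, hasol⟩
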